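/- Let R be a factorial (UFD) domain, s : -ℕ → R, f ∈ Ann(s) with deg f ≥ 1, d = gcd(f, β₀(f,s)/X) and g = f/d. Then: (a) g ∈ Ann(s); (b) β₀(g,s) = β₀(f,s)/d; (c) gcd(g, β₀(g,s)/X) = 1; (d) if d = 1 and h ∈ Ann(s), then β₀(f,s) divides β₀(h,s) and h = (β₀(h,s)/β₀(f,s))·f. -/

import Mathlib

noncomputable section

variable {R : Type*}

/-- Right-shift action on a 1-D sequence indexed by `-ℕ`: index `b : ℕ` encodes `-b`,
so `(f ∘ s)_{-b} = ∑ f_a s_{-b-a}`. -/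
def shiftR1 [CommSemiring R] (f : Polynomial R) (s : ℕ → R) : ℕ → R :=
  fun b => ∑ a ∈ Finset.range (f.natDegree + 1), f.coeff a * s (b + a)

/-- The generating function `Γ(s) = ∑_{c ≤ 0} s_c X^c` as coefficient function on `ℤ`. -/
def Gamma1 [Zero R] (s : ℕ → R) : ℤ → R :=
  fun c => if c ≤ 0 then s (-c).toNat else 0

/-- Coefficient function of the product `f · G` in `R((X⁻¹))`. -/
def polyMul1 [CommSemiring R] (f : Polynomial R) (G : ℤ → R) : ℤ → R :=
  fun c => ∑ a ∈ Finset.range (f.natDegree + 1), f.coeff a * G (c - (a : ℤ))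

/-- Coefficient function on `ℤ` of a polynomial. -/
def toZfun [Semiring R] (p : Polynomial R) : ℤ → R :=
  fun c => if 0 ≤ c then p.coeff c.toNat else 0

/-- The border polynomial `β₀(f,s) = (f·Γ(s)) | [1, deg f]`. -/
def beta0Poly1 [CommSemiring R] (f : Polynomial R) (s : ℕ → R) : Polynomial R :=
  ∑ c ∈ Finset.Icc 1 f.natDegree, Polynomial.monomial c (polyMul1 f (Gamma1 s) (c : ℤ))

/-- `β₀(f,s) / X`. -/
def beta0DivX1 [CommSemiring R] (f : Polynomial R) (s : ℕ → R) : Polynomial R :=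
  ∑ c ∈ Finset.Icc 1 f.natDegree, Polynomial.monomial (c - 1) (polyMul1 f (Gamma1 s) (c : ℤ))

section Lemmas
variable [CommRing R]

lemma polyMul1_eq_sum (f : Polynomial R) (G : ℤ → R) {n : ℕ} (hn : f.natDegree < n) (c : ℤ) :
    polyMul1 f G c = ∑ a ∈ Finset.range n, f.coeff a * G (c - (a : ℤ)) := by
  unfold polyMul1
  refine Finset.sum_subset (by intro x hx; simp_all; omega) ?_
  intro x _ hx
  simp only [Finset.mem_range, not_lt] at hx
  rw [Polynomial.coeff_eq_zero_of_natDegree_lt (by omega), zero_mul]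

lemma polyMul1_add (f g : Polynomial R) (G : ℤ → R) (c : ℤ) :
    polyMul1 (f + g) G c = polyMul1 f G c + polyMul1 g G c := by
  have hfg : (f + g).natDegree < max f.natDegree g.natDegree + 1 :=
    lt_of_le_of_lt (Polynomial.natDegree_add_le f g) (by omega)
  rw [polyMul1_eq_sum (f+g) G hfg,
    polyMul1_eq_sum f G (Nat.lt_succ_of_le (le_max_left _ _)),
    polyMul1_eq_sum g G (Nat.lt_succ_of_le (le_max_right _ _)), ← Finset.sum_add_distrib]
  refine Finset.sum_congr rfl fun a _ => ?_
  rw [Polynomial.coeff_add, add_mul]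

lemma polyMul1_monomial (i : ℕ) (r : R) (G : ℤ → R) (c : ℤ) :
    polyMul1 (Polynomial.monomial i r) G c = r * G (c - (i : ℤ)) := by
  rw [polyMul1_eq_sum _ G (n := i + 1) (lt_of_le_of_lt (Polynomial.natDegree_monomial_le r) (by omega))]
  rw [Finset.sum_eq_single i]
  · simp [Polynomial.coeff_monomial]
  · intro b _ hb; simp [Polynomial.coeff_monomial, Ne.symm hb]
  · intro hi; exact absurd (Finset.self_mem_range_succ i) hi

lemma polyMul1_monomial_mul (i : ℕ) (r : R) (q : Polynomial R) (G : ℤ → R) (c : ℤ) :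
    polyMul1 (Polynomial.monomial i r * q) G c = r * polyMul1 q G (c - (i : ℤ)) := by
  induction q using Polynomial.induction_on' with
  | add p q hp hq =>
    rw [mul_add, polyMul1_add, polyMul1_add, hp, hq, mul_add]
  | monomial n a =>
    rw [Polynomial.monomial_mul_monomial, polyMul1_monomial, polyMul1_monomial,
      Nat.cast_add, ← sub_sub, mul_assoc]

lemma polyMul1_mul (p q : Polynomial R) (G : ℤ → R) (c : ℤ) :
    polyMul1 (p * q) G c = polyMul1 p (polyMul1 q G) c := by
  induction p using Polynomial.induction_on' with
  | add p p' hp hp' => rw [add_mul, polyMul1_add, polyMul1_add, hp, hp']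
  | monomial n a => rw [polyMul1_monomial_mul, polyMul1_monomial]

lemma polyMul1_sub (d : Polynomial R) (F H : ℤ → R) (c : ℤ) :
    polyMul1 d (F - H) c = polyMul1 d F c - polyMul1 d H c := by
  unfold polyMul1
  rw [← Finset.sum_sub_distrib]
  exact Finset.sum_congr rfl fun a _ => by simp [mul_sub]

lemma toZfun_one_apply (c : ℤ) : toZfun (1 : Polynomial R) c = if c = 0 then 1 else 0 := by
  unfold toZfun
  rcases lt_trichotomy c 0 with h | h | h
  · rw [if_neg (by omega), if_neg (by omega)]
  · simp [h]
  · rw [if_pos (by omega), if_neg (by omega), Polynomial.coeff_one, if_neg (by omega)]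

lemma toZfun_eq_polyMul1 (q : Polynomial R) : toZfun q = polyMul1 q (toZfun 1) := by
  funext c
  unfold polyMul1
  simp only [toZfun_one_apply]
  rcases lt_trichotomy c 0 with h | h
  · rw [Finset.sum_eq_zero (fun a _ => by rw [if_neg (by omega), mul_zero])]
    unfold toZfun; rw [if_neg (by omega)]
  · by_cases hc : c.toNat < q.natDegree + 1
    · rw [Finset.sum_eq_single c.toNat]
      · rw [if_pos (by omega), mul_one]
        unfold toZfun; rw [if_pos (by omega)]
      · intro b _ hb; rw [if_neg (by omega), mul_zero]
      · intro hco; exact absurd (Finset.mem_range.mpr hc) hco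
    · rw [Finset.sum_eq_zero (fun a ha => by
        rw [if_neg (by simp at ha; omega), mul_zero])]
      unfold toZfun
      rw [if_pos (by omega), Polynomial.coeff_eq_zero_of_natDegree_lt (by omega)]

lemma polyMul1_toZfun (p q : Polynomial R) :
    polyMul1 p (toZfun q) = toZfun (p * q) := by
  funext c
  rw [toZfun_eq_polyMul1 q, toZfun_eq_polyMul1 (p*q), polyMul1_mul]

lemma toZfun_injective : Function.Injective (toZfun (R := R)) := by
  intro p q h
  ext n
  have := congrFun h (n : ℤ)
  unfold toZfun at this
  simpa using this

end Lemmas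

section Lemmas2
variable [CommRing R]

lemma polyMul1_gamma_nonpos (h : Polynomial R) (s : ℕ → R) {c : ℤ} (hc : c ≤ 0) :
    polyMul1 h (Gamma1 s) c = shiftR1 h s (-c).toNat := by
  unfold polyMul1 shiftR1 Gamma1
  refine Finset.sum_congr rfl fun a _ => ?_
  rw [if_pos (by omega), show (-(c - (a:ℤ))).toNat = (-c).toNat + a by omega]

lemma polyMul1_gamma_pos (h : Polynomial R) (s : ℕ → R) {c : ℤ} (hc : (h.natDegree : ℤ) < c) :
    polyMul1 h (Gamma1 s) c = 0 := by
  unfold polyMul1 Gamma1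
  refine Finset.sum_eq_zero fun a ha => ?_
  simp only [Finset.mem_range] at ha
  rw [if_neg (by omega), mul_zero]

lemma beta0_coeff (f : Polynomial R) (s : ℕ → R) (n : ℕ) :
    (beta0Poly1 f s).coeff n =
      if n ∈ Finset.Icc 1 f.natDegree then polyMul1 f (Gamma1 s) (n : ℤ) else 0 := by
  unfold beta0Poly1
  rw [Polynomial.finset_sum_coeff]
  simp only [Polynomial.coeff_monomial]
  exact Finset.sum_ite_eq' _ _ _

lemma beta0_eq_X_mul (f : Polynomial R) (s : ℕ → R) :
    beta0Poly1 f s = Polynomial.X * beta0DivX1 f s := by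
  unfold beta0Poly1 beta0DivX1
  rw [Finset.mul_sum]
  refine Finset.sum_congr rfl fun c hc => ?_
  simp only [Finset.mem_Icc] at hc
  rw [← Polynomial.monomial_one_one_eq_X, Polynomial.monomial_mul_monomial, one_mul,
    show 1 + (c - 1) = c by omega]

lemma ann_toZfun {h : Polynomial R} {s : ℕ → R} (hh : shiftR1 h s = 0) :
    polyMul1 h (Gamma1 s) = toZfun (beta0Poly1 h s) := by
  funext c
  rcases le_or_gt c 0 with hc | hc
  · rw [polyMul1_gamma_nonpos h s hc, hh]
    unfold toZfun
    rcases eq_or_lt_of_le hc with rfl | hlt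
    · rw [if_pos le_rfl, beta0_coeff, if_neg (by simp)]
      rfl
    · rw [if_neg (by omega)]
      rfl
  · unfold toZfun
    rw [if_pos (by omega), beta0_coeff]
    rcases le_or_gt c (h.natDegree : ℤ) with hle | hgt
    · rw [if_pos (by simp; omega)]
      congr 1
      omega
    · rw [if_neg (by simp; omega), polyMul1_gamma_pos h s hgt]

lemma ann_of_toZfun {g : Polynomial R} {s : ℕ → R} {p : Polynomial R}
    (hp0 : p.coeff 0 = 0) (heq : polyMul1 g (Gamma1 s) = toZfun p) :
    shiftR1 g s = 0 ∧ beta0Poly1 g s = p := by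
  constructor
  · funext b
    have h1 : polyMul1 g (Gamma1 s) (-(b : ℤ)) = shiftR1 g s b := by
      rw [polyMul1_gamma_nonpos g s (by omega)]
      congr 1
      omega
    rw [← h1, heq]
    unfold toZfun
    rcases Nat.eq_zero_or_pos b with rfl | hb
    · simpa using hp0
    · rw [if_neg (by omega)]
      rfl
  · ext n
    rw [beta0_coeff]
    have hn : toZfun p (n : ℤ) = p.coeff n := by unfold toZfun; simp
    rcases Nat.eq_zero_or_pos n with rfl | hn1
    · rw [if_neg (by simp), hp0]
    · rcases le_or_gt n g.natDegree with hle | hgt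
      · rw [if_pos (by simp; omega), heq, hn]
      · rw [if_neg (by simp; omega), ← hn, ← heq,
          polyMul1_gamma_pos g s (by exact_mod_cast hgt)]
end Lemmas2

section Cancel
variable [CommRing R] [IsDomain R]

lemma polyMul1_cancel {d : Polynomial R} (hd : d ≠ 0) {F : ℤ → R} {N : ℤ}
    (hFb : ∀ c, N < c → F c = 0) (h0 : ∀ c, polyMul1 d F c = 0) : ∀ c, F c = 0 := by
  have key : ∀ n : ℕ, F (N - n) = 0 := by
    intro n
    induction n using Nat.strong_induction_on with
    | _ n ih =>
      set D := d.natDegree with hD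
      have h := h0 (N - n + D)
      rw [polyMul1_eq_sum d F (Nat.lt_succ_self D), Finset.sum_range_succ] at h
      have hdrop : ∀ a ∈ Finset.range D, d.coeff a * F (N - n + D - a) = 0 := by
        intro a ha
        simp only [Finset.mem_range] at ha
        rcases le_or_gt (N - n + D - a) N with hle | hgt
        · have hcast : N - (n:ℤ) + D - a = N - ((N - (N - n + D - a)).toNat : ℤ) := by omega
          rw [hcast, ih _ (by omega), mul_zero]
        · rw [hFb _ hgt, mul_zero]
      rw [Finset.sum_eq_zero hdrop, zero_add] at h
      have : N - (n:ℤ) + D - D = N - n := by ring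
      rw [this] at h
      rcases mul_eq_zero.mp h with h' | h'
      · exact absurd h' (by rw [hD]; exact Polynomial.leadingCoeff_ne_zero.mpr hd)
      · exact h'
  intro c
  rcases le_or_gt c N with hle | hgt
  · have : c = N - ((N - c).toNat : ℤ) := by omega
    rw [this]; exact key _
  · exact hFb c hgt

end Cancel

/-- over a factorial domain, with `d = gcd(f, β₀(f,s)/X)` and `g = f/d`:
(a) `g ∈ Ann(s)`; (b) `β₀(g,s) = β₀(f,s)/d`; (c) `gcd(g, β₀(g,s)/X) = 1`;
(d) if `d = 1` and `h ∈ Ann(s)` then `β₀(f,s) ∣ β₀(h,s)` and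
`h = (β₀(h,s)/β₀(f,s))·f`. -/
theorem stmt9 [CommRing R] [IsDomain R] [UniqueFactorizationMonoid R]
    (s : ℕ → R) (f d g : Polynomial R)
    (hf : shiftR1 f s = 0) (hdeg : 1 ≤ f.natDegree)
    (hd1 : d ∣ f) (hd2 : d ∣ beta0DivX1 f s)
    (hd3 : ∀ e : Polynomial R, e ∣ f → e ∣ beta0DivX1 f s → e ∣ d)
    (hg : f = d * g) :
    shiftR1 g s = 0 ∧
    beta0Poly1 f s = d * beta0Poly1 g s ∧
    (∀ e : Polynomial R, e ∣ g → e ∣ beta0DivX1 g s → IsUnit e) ∧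
    (d = 1 → ∀ h : Polynomial R, shiftR1 h s = 0 →
      ∃ q : Polynomial R, beta0Poly1 h s = q * beta0Poly1 f s ∧ h = q * f) := by
  set Γ := Gamma1 s with hΓ
  have hfne : f ≠ 0 := fun h0 => by simp [h0, Polynomial.natDegree_zero] at hdeg
  have hdne : d ≠ 0 := fun h0 => hfne (by rw [hg, h0, zero_mul])
  have hXne : (Polynomial.X : Polynomial R) ≠ 0 := Polynomial.X_ne_zero
  obtain ⟨p', hp'⟩ := hd2
  have hfΓ : polyMul1 f Γ = toZfun (beta0Poly1 f s) := ann_toZfun hf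
  have hbf : beta0Poly1 f s = Polynomial.X * beta0DivX1 f s := beta0_eq_X_mul f s
  -- cancellation step
  set F : ℤ → R := polyMul1 g Γ - toZfun (Polynomial.X * p') with hF
  have h0 : ∀ c, polyMul1 d F c = 0 := by
    intro c
    rw [hF, polyMul1_sub, ← polyMul1_mul, ← hg, hfΓ, polyMul1_toZfun, hbf, hp']
    rw [show Polynomial.X * (d * p') = d * (Polynomial.X * p') by ring, sub_self]
  set N : ℤ := max (g.natDegree : ℤ) ((Polynomial.X * p').natDegree : ℤ) with hN
  have hFb : ∀ c, N < c → F c = 0 := by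
    intro c hc
    rw [hF]
    simp only [Pi.sub_apply]
    rw [polyMul1_gamma_pos g s (by omega)]
    unfold toZfun
    rcases le_or_gt 0 c with h1 | h1
    · rw [if_pos h1, Polynomial.coeff_eq_zero_of_natDegree_lt (by omega), sub_zero]
    · rw [if_neg (by omega), sub_zero]
  have hFz : ∀ c, F c = 0 := polyMul1_cancel hdne hFb h0
  have hgΓ : polyMul1 g Γ = toZfun (Polynomial.X * p') := by
    funext c
    have := hFz c
    rw [hF] at this
    simpa [sub_eq_zero] using this
  have hXp0 : (Polynomial.X * p').coeff 0 = 0 := by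
    rw [Polynomial.mul_coeff_zero, Polynomial.coeff_X_zero, zero_mul]
  obtain ⟨hga, hgb⟩ := ann_of_toZfun hXp0 hgΓ
  have hbfg : beta0Poly1 f s = d * beta0Poly1 g s := by
    rw [hbf, hp', hgb]; ring
  have hbg : beta0Poly1 g s = Polynomial.X * beta0DivX1 g s := beta0_eq_X_mul g s
  have hbdiv : beta0DivX1 f s = d * beta0DivX1 g s := by
    have : Polynomial.X * beta0DivX1 f s = Polynomial.X * (d * beta0DivX1 g s) := by
      rw [← hbf, hbfg, hbg]; ring
    exact mul_left_cancel₀ hXne this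
  refine ⟨hga, hbfg, ?_, ?_⟩
  · intro e he1 he2
    obtain ⟨u, hu⟩ := he1
    obtain ⟨v, hv⟩ := he2
    have h1 : d * e ∣ f := ⟨u, by rw [hg, hu]; ring⟩
    have h2 : d * e ∣ beta0DivX1 f s := ⟨v, by rw [hbdiv, hv]; ring⟩
    obtain ⟨k, hk⟩ := hd3 _ h1 h2
    have : d * 1 = d * (e * k) := by rw [mul_one, ← mul_assoc]; exact hk
    exact IsUnit.of_mul_eq_one (a := e) k (mul_left_cancel₀ hdne this).symm
  · intro hd1eq h hh
    have hhΓ : polyMul1 h Γ = toZfun (beta0Poly1 h s) := ann_toZfun hh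
    -- key identity: h * β₀f = f * β₀h
    have hkey : h * beta0Poly1 f s = f * beta0Poly1 h s := by
      apply toZfun_injective
      rw [← polyMul1_toZfun, ← polyMul1_toZfun, ← hfΓ, ← hhΓ]
      funext c
      rw [← polyMul1_mul, ← polyMul1_mul, mul_comm h f]
    have hbh : beta0Poly1 h s = Polynomial.X * beta0DivX1 h s := beta0_eq_X_mul h s
    have hkey2 : h * beta0DivX1 f s = f * beta0DivX1 h s := by
      apply mul_left_cancel₀ hXne
      rw [show Polynomial.X * (h * beta0DivX1 f s) = h * (Polynomial.X * beta0DivX1 f s) by ring,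
        ← hbf, hkey, hbh]; ring
    have hcop : ∀ ⦃e : Polynomial R⦄, e ∣ f → e ∣ beta0DivX1 f s → ¬Prime e := by
      intro e h1 h2 hp
      have := hd3 e h1 h2
      rw [hd1eq] at this
      exact hp.not_unit (isUnit_of_dvd_one this)
    have hfh : f ∣ h :=
      UniqueFactorizationMonoid.dvd_of_dvd_mul_left_of_no_prime_factors hfne hcop
        ⟨beta0DivX1 h s, hkey2⟩
    obtain ⟨q, hq⟩ := hfh
    refine ⟨q, ?_, by rw [hq]; ring⟩
    have : f * beta0DivX1 h s = f * (q * beta0DivX1 f s) := by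
      rw [← hkey2, hq]; ring
    have hbhq : beta0DivX1 h s = q * beta0DivX1 f s := mul_left_cancel₀ hfne this
    rw [hbh, hbhq, hbf]; ring
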